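/- Let q : ℝ^{2d} → ℂ be a quadratic form with Hamilton map F such that Re q(X) ≥ 0 for all X and with trivial singular space S = {0}. Fix X ∈ ℝ^{2d} \ {0} and let k = k(X) be the smallest nonnegative integer with (Re F)∘(Im F)^k X ≠ 0 (which exists and satisfies k ≤ 2d−1). Then Re q((Im F)^k X) > 0, and there exists a constant C > 0, depending only on k, ‖Re F‖ and ‖Im F‖, such that for all |t| ≤ 1: |Re q(exp(t·Im F)X) − (t^{2k}/(k!)²)·Re q((Im F)^k X)| ≤ C‖X‖² |t|^{2k+1}. -/

import Mathlib

open Matrix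

noncomputable section

/-- The standard symplectic matrix `J = [[0, -I], [I, 0]]` on `R^d ⊕ R^d`. -/
def Jmat (d : ℕ) (R : Type*) [Ring R] :
    Matrix (Fin d ⊕ Fin d) (Fin d ⊕ Fin d) R :=
  Matrix.fromBlocks 0 (-1) 1 0

/-- The complex quadratic form `X ↦ ⟨X, A X⟩` evaluated on a real vector `X ∈ ℝ^{2d}`. -/
def Qc {d : ℕ} (A : Matrix (Fin d ⊕ Fin d) (Fin d ⊕ Fin d) ℂ)
    (X : Fin d ⊕ Fin d → ℝ) : ℂ :=
  (fun i => (X i : ℂ)) ⬝ᵥ A *ᵥ (fun i => (X i : ℂ))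

section Aux

open NormedSpace

set_option linter.unusedSectionVars false

lemma Qc_re {d : ℕ} (A : Matrix (Fin d ⊕ Fin d) (Fin d ⊕ Fin d) ℂ) (X : Fin d ⊕ Fin d → ℝ) :
    (Qc A X).re = X ⬝ᵥ (A.map Complex.re) *ᵥ X := by
  simp only [Qc, dotProduct, mulVec, Complex.re_sum, map_apply]
  refine Finset.sum_congr rfl fun i _ => ?_
  rw [Complex.re_ofReal_mul, Complex.re_sum]
  congr 1
  refine Finset.sum_congr rfl fun j _ => ?_
  simp [Complex.mul_re]

lemma Jc_eq (d : ℕ) (i j : Fin d ⊕ Fin d) : (Jmat d ℂ) i j = ((Jmat d ℝ) i j : ℂ) := by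
  rcases i with i | i <;> rcases j with j | j <;>
    simp [Jmat, Matrix.one_apply] <;> split_ifs <;> simp

lemma J_sq (d : ℕ) : (Jmat d ℝ) * (Jmat d ℝ) = -1 := by
  simp [Jmat, Matrix.fromBlocks_multiply, ← Matrix.fromBlocks_one, Matrix.fromBlocks_neg]

lemma mapre (d : ℕ) (A : Matrix (Fin d ⊕ Fin d) (Fin d ⊕ Fin d) ℂ) :
    ((-(Jmat d ℂ) * A).map Complex.re) = -(Jmat d ℝ) * (A.map Complex.re) := by
  ext i j
  simp only [Matrix.map_apply, Matrix.mul_apply, Matrix.neg_apply, Complex.re_sum]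
  refine Finset.sum_congr rfl fun k _ => ?_
  rw [Jc_eq]
  rw [← Complex.ofReal_neg, Complex.re_ofReal_mul]

lemma mapim (d : ℕ) (A : Matrix (Fin d ⊕ Fin d) (Fin d ⊕ Fin d) ℂ) :
    ((-(Jmat d ℂ) * A).map Complex.im) = -(Jmat d ℝ) * (A.map Complex.im) := by
  ext i j
  simp only [Matrix.map_apply, Matrix.mul_apply, Matrix.neg_apply, Complex.im_sum]
  refine Finset.sum_congr rfl fun k _ => ?_
  rw [Jc_eq]
  rw [← Complex.ofReal_neg, Complex.im_ofReal_mul]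

variable {ι : Type*} [Fintype ι] [DecidableEq ι]

lemma symm_swap (B : Matrix ι ι ℝ) (hB : B.IsSymm) (u v : ι → ℝ) :
    u ⬝ᵥ B *ᵥ v = (B *ᵥ u) ⬝ᵥ v := by
  rw [Matrix.dotProduct_mulVec, ← Matrix.mulVec_transpose, hB.eq]

lemma psd_kernel (B : Matrix ι ι ℝ) (hB : B.IsSymm)
    (hpos : ∀ v, 0 ≤ v ⬝ᵥ B *ᵥ v) (v : ι → ℝ) (hv : v ⬝ᵥ B *ᵥ v = 0) :
    B *ᵥ v = 0 := by
  have key : ∀ z : ι → ℝ, z ⬝ᵥ B *ᵥ v = 0 := by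
    intro z
    by_contra hc
    set c := z ⬝ᵥ B *ᵥ v with hcdef
    set a := z ⬝ᵥ B *ᵥ z with hadef
    have hsw : v ⬝ᵥ B *ᵥ z = c := by
      rw [symm_swap B hB, dotProduct_comm]
    have hq : ∀ t : ℝ, 0 ≤ a + 2 * c * t := by
      intro t
      have h0 := hpos (z + t • v)
      have expand : (z + t • v) ⬝ᵥ B *ᵥ (z + t • v) = a + 2 * c * t := by
        simp only [Matrix.mulVec_add, Matrix.mulVec_smul, dotProduct_add,
          add_dotProduct, dotProduct_smul, smul_dotProduct, smul_eq_mul]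
        rw [hv, hsw, ← hcdef, ← hadef]
        ring
      rw [expand] at h0; exact h0
    have h2c : (2 * c) ≠ 0 := by simpa using hc
    have := hq (-(a + 1) / (2 * c))
    rw [mul_div_cancel₀ _ h2c] at this
    linarith
  have := key (B *ᵥ v)
  rwa [dotProduct_self_eq_zero] at this

attribute [local instance] Matrix.linftyOpNormedRing Matrix.linftyOpNormedAlgebra

lemma sum_mulVec' {s : Finset ℕ} (f : ℕ → Matrix ι ι ℝ) (Y : ι → ℝ) :
    (∑ n ∈ s, f n) *ᵥ Y = ∑ n ∈ s, f n *ᵥ Y :=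
  map_sum (AddMonoidHom.mk' (fun M : Matrix ι ι ℝ => M *ᵥ Y)
    (fun M N => Matrix.add_mulVec M N Y)) f s

lemma mulVec_sum' {s : Finset ℕ} (M : Matrix ι ι ℝ) (f : ℕ → ι → ℝ) :
    M *ᵥ (∑ n ∈ s, f n) = ∑ n ∈ s, M *ᵥ f n :=
  map_sum (AddMonoidHom.mk' (fun v : ι → ℝ => M *ᵥ v)
    (fun u v => Matrix.mulVec_add M u v)) f s

lemma pow_mulVec_le (B : Matrix ι ι ℝ) (n : ℕ) : ∀ Y : ι → ℝ,
    ‖B ^ n *ᵥ Y‖ ≤ ‖B‖ ^ n * ‖Y‖ := by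
  induction n with
  | zero => intro Y; simp [Matrix.one_mulVec]
  | succ n ih =>
    intro Y
    rw [pow_succ, ← Matrix.mulVec_mulVec]
    calc ‖B ^ n *ᵥ B *ᵥ Y‖ ≤ ‖B‖ ^ n * ‖B *ᵥ Y‖ := ih _
      _ ≤ ‖B‖ ^ n * (‖B‖ * ‖Y‖) :=
          mul_le_mul_of_nonneg_left (Matrix.linfty_opNorm_mulVec _ _) (by positivity)
      _ = ‖B‖ ^ (n + 1) * ‖Y‖ := by ring

lemma fact_ineq (i N : ℕ) : (i.factorial : ℝ) ≤ ((i + N).factorial : ℝ) := by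
  exact_mod_cast Nat.factorial_le (Nat.le_add_right i N)

lemma exp_tail {𝔸 : Type*} [NormedRing 𝔸] [NormedAlgebra ℝ 𝔸] [CompleteSpace 𝔸]
    (x : 𝔸) (N : ℕ) (hN : 0 < N) :
    ‖exp x - ∑ n ∈ Finset.range N, ((n.factorial : ℝ))⁻¹ • x ^ n‖
      ≤ ‖x‖ ^ N * Real.exp ‖x‖ := by
  have hsum : Summable fun n : ℕ => ((n.factorial : ℝ))⁻¹ • x ^ n := expSeries_summable' x
  have hdiff : exp x - ∑ n ∈ Finset.range N, ((n.factorial : ℝ))⁻¹ • x ^ n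
      = ∑' i : ℕ, (((i + N).factorial : ℝ))⁻¹ • x ^ (i + N) := by
    rw [exp_eq_tsum ℝ]
    simp only
    rw [← Summable.sum_add_tsum_nat_add N hsum]
    abel
  rw [hdiff]
  have hbound : ∀ i : ℕ, ‖(((i + N).factorial : ℝ))⁻¹ • x ^ (i + N)‖
      ≤ ‖x‖ ^ N * (‖x‖ ^ i / i.factorial) := by
    intro i
    rw [norm_smul]
    have h1 : ‖x ^ (i + N)‖ ≤ ‖x‖ ^ (i + N) := norm_pow_le' x (by omega)
    have h2 : ‖(((i + N).factorial : ℝ))⁻¹‖ ≤ (i.factorial : ℝ)⁻¹ := by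
      rw [Real.norm_eq_abs, abs_of_nonneg (by positivity)]
      exact inv_anti₀ (by positivity) (fact_ineq i N)
    calc ‖(((i + N).factorial : ℝ))⁻¹‖ * ‖x ^ (i + N)‖
        ≤ (i.factorial : ℝ)⁻¹ * ‖x‖ ^ (i + N) :=
          mul_le_mul h2 h1 (norm_nonneg _) (by positivity)
      _ = ‖x‖ ^ N * (‖x‖ ^ i / i.factorial) := by
          rw [pow_add]; field_simp
  have hsum2 : Summable fun i : ℕ => ‖x‖ ^ N * (‖x‖ ^ i / i.factorial) :=
    (Real.summable_pow_div_factorial ‖x‖).mul_left _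
  have hsum3 : Summable fun i : ℕ => ‖(((i + N).factorial : ℝ))⁻¹ • x ^ (i + N)‖ :=
    Summable.of_nonneg_of_le (fun i => norm_nonneg _) hbound hsum2
  calc ‖∑' i : ℕ, (((i + N).factorial : ℝ))⁻¹ • x ^ (i + N)‖
      ≤ ∑' i : ℕ, ‖(((i + N).factorial : ℝ))⁻¹ • x ^ (i + N)‖ :=
        norm_tsum_le_tsum_norm hsum3
    _ ≤ ∑' i : ℕ, ‖x‖ ^ N * (‖x‖ ^ i / i.factorial) := Summable.tsum_le_tsum hbound hsum3 hsum2
    _ = ‖x‖ ^ N * Real.exp ‖x‖ := by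
        rw [tsum_mul_left]
        congr 1
        rw [Real.exp_eq_exp_ℝ, exp_eq_tsum ℝ]
        exact tsum_congr fun i => by rw [smul_eq_mul, div_eq_inv_mul]

lemma dot_abs_le (u v : ι → ℝ) : |u ⬝ᵥ v| ≤ (Fintype.card ι : ℝ) * (‖u‖ * ‖v‖) := by
  calc |u ⬝ᵥ v| ≤ ∑ i, |u i * v i| := Finset.abs_sum_le_sum_abs _ _
    _ ≤ ∑ _i : ι, ‖u‖ * ‖v‖ := by
        refine Finset.sum_le_sum fun i _ => ?_
        rw [abs_mul]
        exact mul_le_mul (norm_le_pi_norm u i) (norm_le_pi_norm v i) (abs_nonneg _)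
          (norm_nonneg _)
    _ = (Fintype.card ι : ℝ) * (‖u‖ * ‖v‖) := by
        rw [Finset.sum_const, Finset.card_univ, nsmul_eq_mul]

lemma norm_sq_le_dot (Y : ι → ℝ) : ‖Y‖ ^ 2 ≤ Y ⬝ᵥ Y := by
  have h : ‖Y‖ ≤ Real.sqrt (Y ⬝ᵥ Y) := by
    rw [pi_norm_le_iff_of_nonneg (Real.sqrt_nonneg _)]
    intro i
    rw [show ‖Y i‖ = |Y i| from rfl, ← Real.sqrt_sq_eq_abs]
    apply Real.sqrt_le_sqrt
    rw [sq]
    exact Finset.single_le_sum (f := fun j => Y j * Y j)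
      (fun j _ => mul_self_nonneg _) (Finset.mem_univ i)
  calc ‖Y‖ ^ 2 ≤ Real.sqrt (Y ⬝ᵥ Y) ^ 2 := pow_le_pow_left₀ (norm_nonneg _) h 2
    _ = Y ⬝ᵥ Y := Real.sq_sqrt (Finset.sum_nonneg fun i _ => mul_self_nonneg _)

set_option maxHeartbeats 1000000 in
/-- The core estimate. -/
lemma core_estimate (Ar B : Matrix ι ι ℝ) (hAr : Ar.IsSymm) (k : ℕ) (Y : ι → ℝ)
    (hzero : ∀ j, j < k → Ar *ᵥ ((B ^ j) *ᵥ Y) = 0) (t : ℝ) (ht : |t| ≤ 1) :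
    |(exp (t • B) *ᵥ Y) ⬝ᵥ Ar *ᵥ (exp (t • B) *ᵥ Y)
        - t ^ (2 * k) / ((k.factorial : ℝ)) ^ 2 * ((B ^ k *ᵥ Y) ⬝ᵥ Ar *ᵥ (B ^ k *ᵥ Y))|
      ≤ ((Fintype.card ι : ℝ) * ‖Ar‖ *
          (2 * Real.exp ‖B‖ * (‖B‖ ^ (k+1) * Real.exp ‖B‖)
            + (‖B‖ ^ (k+1) * Real.exp ‖B‖) ^ 2) + 1) * (Y ⬝ᵥ Y) * |t| ^ (2 * k + 1) := by
  set cardR : ℝ := (Fintype.card ι : ℝ) with hcard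
  set nA : ℝ := ‖Ar‖ with hnA
  set nB : ℝ := ‖B‖ with hnB
  set E : ℝ := Real.exp nB with hE
  set D : ℝ := nB ^ (k+1) * E with hD
  set w : ι → ℝ := exp (t • B) *ᵥ Y with hw
  set g : Matrix ι ι ℝ := ∑ n ∈ Finset.range (k+1), ((n.factorial : ℝ))⁻¹ • (t • B) ^ n
    with hg
  set s : ι → ℝ := (t ^ k * ((k.factorial : ℝ))⁻¹) • (B ^ k *ᵥ Y) with hs
  set r : ι → ℝ := w - g *ᵥ Y with hr
  have hgY : g *ᵥ Y = ∑ n ∈ Finset.range (k+1), (t ^ n * ((n.factorial : ℝ))⁻¹) • (B ^ n *ᵥ Y) := by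
    rw [hg, sum_mulVec']
    refine Finset.sum_congr rfl fun n _ => ?_
    rw [smul_pow, smul_smul, Matrix.smul_mulVec, mul_comm]
  set p : ι → ℝ := g *ᵥ Y - s with hp
  have hArp : Ar *ᵥ p = 0 := by
    rw [hp, hgY, hs, Finset.sum_range_succ, add_sub_cancel_right, mulVec_sum']
    refine Finset.sum_eq_zero fun n hn => ?_
    rw [Matrix.mulVec_smul]
    rw [hzero n (Finset.mem_range.mp hn), smul_zero]
  have hwdecomp : w = p + (s + r) := by rw [hp, hr]; abel
  have hswap := symm_swap Ar hAr
  have hiden : w ⬝ᵥ Ar *ᵥ w = (s + r) ⬝ᵥ Ar *ᵥ (s + r) := by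
    rw [hwdecomp, Matrix.mulVec_add, hArp, zero_add, add_dotProduct,
      hswap p, hArp, zero_dotProduct, zero_add]
  have hsAs : s ⬝ᵥ Ar *ᵥ s
      = t ^ (2 * k) / ((k.factorial : ℝ)) ^ 2 * ((B ^ k *ᵥ Y) ⬝ᵥ Ar *ᵥ (B ^ k *ᵥ Y)) := by
    rw [hs, smul_dotProduct, Matrix.mulVec_smul, dotProduct_smul, smul_eq_mul, smul_eq_mul,
      ← mul_assoc]
    congr 1
    rw [two_mul, pow_add, sq]
    field_simp
  have herr : w ⬝ᵥ Ar *ᵥ w - t ^ (2 * k) / ((k.factorial : ℝ)) ^ 2 *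
      ((B ^ k *ᵥ Y) ⬝ᵥ Ar *ᵥ (B ^ k *ᵥ Y))
      = s ⬝ᵥ Ar *ᵥ r + r ⬝ᵥ Ar *ᵥ s + r ⬝ᵥ Ar *ᵥ r := by
    rw [hiden, ← hsAs]
    simp only [Matrix.mulVec_add, dotProduct_add, add_dotProduct]
    ring
  rw [herr]
  have hnA0 : 0 ≤ nA := norm_nonneg _
  have hnB0 : 0 ≤ nB := norm_nonneg _
  have hE0 : 0 < E := Real.exp_pos _
  have hD0 : 0 ≤ D := by positivity
  have hY0 : 0 ≤ ‖Y‖ := norm_nonneg _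
  have ht0 : 0 ≤ |t| := abs_nonneg _
  have hcard0 : 0 ≤ cardR := by positivity
  have hsbound : ‖s‖ ≤ E * ‖Y‖ * |t| ^ k := by
    rw [hs, norm_smul, Real.norm_eq_abs, abs_mul, abs_pow]
    have h1 : ‖B ^ k *ᵥ Y‖ ≤ nB ^ k * ‖Y‖ := pow_mulVec_le B k Y
    have h2 : |((k.factorial : ℝ))⁻¹| = ((k.factorial : ℝ))⁻¹ := abs_of_nonneg (by positivity)
    rw [h2]
    calc |t| ^ k * ((k.factorial : ℝ))⁻¹ * ‖B ^ k *ᵥ Y‖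
        ≤ |t| ^ k * ((k.factorial : ℝ))⁻¹ * (nB ^ k * ‖Y‖) :=
          mul_le_mul_of_nonneg_left h1 (by positivity)
      _ = (nB ^ k / (k.factorial : ℝ)) * ‖Y‖ * |t| ^ k := by ring
      _ ≤ E * ‖Y‖ * |t| ^ k := by
          have := Real.pow_div_factorial_le_exp nB hnB0 k
          exact mul_le_mul_of_nonneg_right
            (mul_le_mul_of_nonneg_right this hY0) (by positivity)
  have hrbound : ‖r‖ ≤ D * ‖Y‖ * |t| ^ (k + 1) := by
    have h1 : r = (exp (t • B) - g) *ᵥ Y := by rw [hr, Matrix.sub_mulVec, hw]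
    rw [h1]
    calc ‖(exp (t • B) - g) *ᵥ Y‖ ≤ ‖exp (t • B) - g‖ * ‖Y‖ :=
          Matrix.linfty_opNorm_mulVec _ _
      _ ≤ (‖t • B‖ ^ (k+1) * Real.exp ‖t • B‖) * ‖Y‖ :=
          mul_le_mul_of_nonneg_right (exp_tail (t • B) (k+1) (by omega)) hY0
      _ ≤ D * ‖Y‖ * |t| ^ (k + 1) := by
          rw [norm_smul, Real.norm_eq_abs]
          have htB : |t| * nB ≤ nB := by
            calc |t| * nB ≤ 1 * nB := mul_le_mul_of_nonneg_right ht hnB0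
              _ = nB := one_mul nB
          have hexp : Real.exp (|t| * nB) ≤ E := Real.exp_le_exp.mpr htB
          calc (|t| * nB) ^ (k+1) * Real.exp (|t| * nB) * ‖Y‖
              ≤ (|t| * nB) ^ (k+1) * E * ‖Y‖ :=
                mul_le_mul_of_nonneg_right
                  (mul_le_mul_of_nonneg_left hexp (by positivity)) hY0
            _ = (|t| ^ (k+1) * (nB ^ (k+1) * E)) * ‖Y‖ := by rw [mul_pow]; ring
            _ = D * ‖Y‖ * |t| ^ (k + 1) := by rw [hD]; ring
  have habs : ∀ u v : ι → ℝ, |u ⬝ᵥ Ar *ᵥ v| ≤ cardR * nA * (‖u‖ * ‖v‖) := by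
    intro u v
    calc |u ⬝ᵥ Ar *ᵥ v| ≤ cardR * (‖u‖ * ‖Ar *ᵥ v‖) := dot_abs_le _ _
      _ ≤ cardR * (‖u‖ * (nA * ‖v‖)) := by
          refine mul_le_mul_of_nonneg_left ?_ hcard0
          exact mul_le_mul_of_nonneg_left (Matrix.linfty_opNorm_mulVec _ _) (norm_nonneg u)
      _ = cardR * nA * (‖u‖ * ‖v‖) := by ring
  set as : ℝ := E * ‖Y‖ * |t| ^ k with has
  set br : ℝ := D * ‖Y‖ * |t| ^ (k + 1) with hbr
  have has0 : 0 ≤ as := mul_nonneg (mul_nonneg hE0.le hY0) (pow_nonneg ht0 _)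
  have hbr0 : 0 ≤ br := mul_nonneg (mul_nonneg hD0 hY0) (pow_nonneg ht0 _)
  have h2ED : 0 ≤ 2 * E * D := mul_nonneg (mul_nonneg (by norm_num) hE0.le) hD0
  have hco0 : 0 ≤ cardR * nA * (2 * E * D + D ^ 2) :=
    mul_nonneg (mul_nonneg hcard0 hnA0) (add_nonneg h2ED (sq_nonneg D))
  have hdot0 : 0 ≤ Y ⬝ᵥ Y := Finset.sum_nonneg fun i _ => mul_self_nonneg _
  have hYsq : ‖Y‖ ^ 2 ≤ Y ⬝ᵥ Y := norm_sq_le_dot Y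
  have hsr : ‖s‖ * ‖r‖ ≤ as * br := mul_le_mul hsbound hrbound (norm_nonneg _) has0
  have hrs : ‖r‖ * ‖s‖ ≤ br * as := mul_le_mul hrbound hsbound (norm_nonneg _) hbr0
  have hrr : ‖r‖ * ‖r‖ ≤ br * br := mul_le_mul hrbound hrbound (norm_nonneg _) hbr0
  have h1 : |s ⬝ᵥ Ar *ᵥ r| ≤ cardR * nA * (as * br) :=
    (habs s r).trans (mul_le_mul_of_nonneg_left hsr (mul_nonneg hcard0 hnA0))
  have h2 : |r ⬝ᵥ Ar *ᵥ s| ≤ cardR * nA * (br * as) :=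
    (habs r s).trans (mul_le_mul_of_nonneg_left hrs (mul_nonneg hcard0 hnA0))
  have h3 : |r ⬝ᵥ Ar *ᵥ r| ≤ cardR * nA * (br * br) :=
    (habs r r).trans (mul_le_mul_of_nonneg_left hrr (mul_nonneg hcard0 hnA0))
  have e1 : as * br = E * D * ‖Y‖ ^ 2 * |t| ^ (2 * k + 1) := by
    rw [has, hbr]; ring
  have e2 : br * br = D ^ 2 * ‖Y‖ ^ 2 * |t| ^ (2 * k + 1) * |t| := by
    rw [hbr]; ring
  have e2' : br * br ≤ D ^ 2 * ‖Y‖ ^ 2 * |t| ^ (2 * k + 1) := by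
    rw [e2]
    exact mul_le_of_le_one_right (by positivity) ht
  calc |s ⬝ᵥ Ar *ᵥ r + r ⬝ᵥ Ar *ᵥ s + r ⬝ᵥ Ar *ᵥ r|
      ≤ |s ⬝ᵥ Ar *ᵥ r| + |r ⬝ᵥ Ar *ᵥ s| + |r ⬝ᵥ Ar *ᵥ r| := abs_add_three _ _ _
    _ ≤ cardR * nA * (as * br) + cardR * nA * (br * as) + cardR * nA * (br * br) :=
        add_le_add (add_le_add h1 h2) h3
    _ ≤ cardR * nA * (E * D * ‖Y‖ ^ 2 * |t| ^ (2 * k + 1))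
          + cardR * nA * (E * D * ‖Y‖ ^ 2 * |t| ^ (2 * k + 1))
          + cardR * nA * (D ^ 2 * ‖Y‖ ^ 2 * |t| ^ (2 * k + 1)) := by
        rw [← e1]
        refine add_le_add (add_le_add le_rfl ?_) ?_
        · rw [mul_comm br as]
        · exact mul_le_mul_of_nonneg_left e2' (mul_nonneg hcard0 hnA0)
    _ = cardR * nA * (2 * E * D + D ^ 2) * ‖Y‖ ^ 2 * |t| ^ (2 * k + 1) := by ring
    _ ≤ (cardR * nA * (2 * E * D + D ^ 2) + 1) * (Y ⬝ᵥ Y) * |t| ^ (2 * k + 1) := by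
        refine mul_le_mul_of_nonneg_right ?_ (pow_nonneg ht0 _)
        have h6 : cardR * nA * (2 * E * D + D ^ 2) * ‖Y‖ ^ 2
            ≤ cardR * nA * (2 * E * D + D ^ 2) * (Y ⬝ᵥ Y) :=
          mul_le_mul_of_nonneg_left hYsq hco0
        nlinarith [hdot0]

end Aux

set_option maxHeartbeats 1000000 in
/-- Let `q(X) = ⟨X, A X⟩` with Hamilton map `F = -J A`, `Re q ≥ 0` and
trivial singular space.  For `X ≠ 0` there is a smallest `k` (necessarily `k ≤ 2d - 1`)
with `(Re F)(Im F)^k X ≠ 0`; then `Re q((Im F)^k X) > 0` and there is `C > 0`, depending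
only on `k`, `‖Re F‖`, `‖Im F‖` (in particular uniform in the vector), such that for
`|t| ≤ 1` one has
`|Re q(exp(t Im F) X) - (t^{2k}/(k!)²) Re q((Im F)^k X)| ≤ C ‖X‖² |t|^{2k+1}`. -/
theorem statement2 (d : ℕ) (hd : 0 < d)
    (A F : Matrix (Fin d ⊕ Fin d) (Fin d ⊕ Fin d) ℂ)
    (hA : A.IsSymm)
    (hF : F = -(Jmat d ℂ) * A)
    (hpos : ∀ X : Fin d ⊕ Fin d → ℝ, 0 ≤ (Qc A X).re)
    (hS : ∀ X : Fin d ⊕ Fin d → ℝ,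
      (∀ k : ℕ, k ≤ 2 * d - 1 →
        (F.map Complex.re * (F.map Complex.im) ^ k) *ᵥ X = 0) → X = 0)
    (X : Fin d ⊕ Fin d → ℝ) (hX : X ≠ 0) :
    ∃ k : ℕ,
      (∀ j : ℕ, j < k → (F.map Complex.re * (F.map Complex.im) ^ j) *ᵥ X = 0) ∧
      (F.map Complex.re * (F.map Complex.im) ^ k) *ᵥ X ≠ 0 ∧
      k ≤ 2 * d - 1 ∧
      0 < (Qc A ((F.map Complex.im) ^ k *ᵥ X)).re ∧
      ∃ C : ℝ, 0 < C ∧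
        ∀ Y : Fin d ⊕ Fin d → ℝ,
          (∀ j : ℕ, j < k → (F.map Complex.re * (F.map Complex.im) ^ j) *ᵥ Y = 0) →
          ∀ t : ℝ, |t| ≤ 1 →
            |(Qc A (NormedSpace.exp (t • F.map Complex.im) *ᵥ Y)).re -
                t ^ (2 * k) / ((k.factorial : ℝ)) ^ 2 *
                  (Qc A ((F.map Complex.im) ^ k *ᵥ Y)).re|
              ≤ C * (Y ⬝ᵥ Y) * |t| ^ (2 * k + 1) := by
  classical
  set Ar : Matrix (Fin d ⊕ Fin d) (Fin d ⊕ Fin d) ℝ := A.map Complex.re with hAr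
  set Rr : Matrix (Fin d ⊕ Fin d) (Fin d ⊕ Fin d) ℝ := F.map Complex.re with hRr
  set Ri : Matrix (Fin d ⊕ Fin d) (Fin d ⊕ Fin d) ℝ := F.map Complex.im with hRi
  have hArsymm : Ar.IsSymm := by
    rw [hAr, Matrix.IsSymm, ← Matrix.transpose_map, hA.eq]
  have hRrAr : Rr = -(Jmat d ℝ) * Ar := by
    rw [hRr, hAr, hF]; exact mapre d A
  have hJiff : ∀ v : Fin d ⊕ Fin d → ℝ, Rr *ᵥ v = 0 ↔ Ar *ᵥ v = 0 := by
    intro v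
    constructor
    · intro h
      have h2 : (Jmat d ℝ * Rr) *ᵥ v = 0 := by
        rw [← Matrix.mulVec_mulVec, h, Matrix.mulVec_zero]
      have h3 : Jmat d ℝ * Rr = Ar := by
        rw [hRrAr, Matrix.neg_mul, Matrix.mul_neg, ← Matrix.mul_assoc, J_sq]
        simp
      rwa [h3] at h2
    · intro h
      rw [hRrAr, Matrix.neg_mul, Matrix.neg_mulVec, ← Matrix.mulVec_mulVec, h,
        Matrix.mulVec_zero, neg_zero]
  have hArpos : ∀ v : Fin d ⊕ Fin d → ℝ, 0 ≤ v ⬝ᵥ Ar *ᵥ v := by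
    intro v
    have := hpos v
    rwa [Qc_re] at this
  have hArposdef : ∀ v : Fin d ⊕ Fin d → ℝ, Ar *ᵥ v ≠ 0 → 0 < v ⬝ᵥ Ar *ᵥ v := by
    intro v hv
    rcases lt_or_eq_of_le (hArpos v) with h | h
    · exact h
    · exact absurd (psd_kernel Ar hArsymm hArpos v h.symm) hv
  -- existence of k
  have hex : ∃ n : ℕ, n ≤ 2 * d - 1 ∧ (Rr * Ri ^ n) *ᵥ X ≠ 0 := by
    by_contra hcon
    push_neg at hcon
    exact hX (hS X fun n hn => hcon n hn)
  obtain ⟨n0, hn0le, hn0⟩ := hex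
  have hPex : ∃ n : ℕ, (Rr * Ri ^ n) *ᵥ X ≠ 0 := ⟨n0, hn0⟩
  refine ⟨Nat.find hPex, fun j hj => ?_, Nat.find_spec hPex,
    (Nat.find_le hn0).trans hn0le, ?_, ?_⟩
  · exact of_not_not (Nat.find_min hPex hj)
  · -- positivity
    set k := Nat.find hPex with hk
    have h1 : Rr *ᵥ (Ri ^ k *ᵥ X) ≠ 0 := by
      rw [Matrix.mulVec_mulVec]; exact Nat.find_spec hPex
    have h2 : Ar *ᵥ (Ri ^ k *ᵥ X) ≠ 0 := fun h => h1 ((hJiff _).mpr h)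
    rw [Qc_re]
    exact hArposdef _ h2
  · -- the estimate
    set k := Nat.find hPex with hk
    letI : NormedRing (Matrix (Fin d ⊕ Fin d) (Fin d ⊕ Fin d) ℝ) := Matrix.linftyOpNormedRing
    letI : NormedAlgebra ℝ (Matrix (Fin d ⊕ Fin d) (Fin d ⊕ Fin d) ℝ) :=
      Matrix.linftyOpNormedAlgebra
    refine ⟨(Fintype.card (Fin d ⊕ Fin d) : ℝ) * ‖Ar‖ *
          (2 * Real.exp ‖Ri‖ * (‖Ri‖ ^ (k+1) * Real.exp ‖Ri‖)
            + (‖Ri‖ ^ (k+1) * Real.exp ‖Ri‖) ^ 2) + 1, ?_, ?_⟩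
    · positivity
    · intro Y hY t ht
      have hzero : ∀ j, j < k → Ar *ᵥ ((Ri ^ j) *ᵥ Y) = 0 := by
        intro j hj
        exact (hJiff _).mp (by rw [Matrix.mulVec_mulVec]; exact hY j hj)
      have := core_estimate Ar Ri hArsymm k Y hzero t ht
      rwa [← Qc_re, ← Qc_re] at this
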